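/- (Stability of the signal arrival time.) Let 0 < c₀ < c, 0 < d₁ ≤ d₀, and T ≥ d₀/c, let x, ν ∈ ℝ³, and let f : ℝ → ℝ³ be continuous with η := inf_{t∈[0,T]} ‖f t ×₃ ν‖_∞ > 0. Let a, ã : ℝ → ℝ³ be differentiable with ‖deriv a t‖ ≤ c₀, ‖deriv ã t‖ ≤ c₀, d₁ ≤ ‖x - a t‖ ≤ d₀ and d₁ ≤ ‖x - ã t‖ ≤ d₀ for all t, and let Hν and H̃ν be the tangential fields of the orbits a and ã respectively. Then, with arrival times T(x) := ‖x - a 0‖/c and T̃(x) := ‖x - ã 0‖/c, one has |T(x) − T̃(x)| ≤ C₀ · sup_{s∈[0,T]} ‖Hν s − H̃ν s‖_∞, where C₀ := 12π·d₀·(c + c₀)·T / (c·η). -/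

import Mathlib

noncomputable section

abbrev E3 := EuclideanSpace ℝ (Fin 3)

/-- The cross product on `ℝ³`. -/
def cross3 (u v : E3) : E3 :=
  WithLp.toLp 2 ![u 1 * v 2 - u 2 * v 1, u 2 * v 0 - u 0 * v 2, u 0 * v 1 - u 1 * v 0]

/-- The maximum norm `‖y‖_∞ = maximum over i of |y i|` on `ℝ³`. -/
def ninf (y : E3) : ℝ := ⨆ i : Fin 3, |y i|

/-- `Hν` is the tangential field of the orbit `a` (relative to the observation point `x`,
the source profile `f` and the vector `ν`, with wave speed `c`). -/
def tangentialField (c : ℝ) (x : E3) (a f : ℝ → E3) (ν : E3) (Hν : ℝ → E3) : Prop :=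
  (∀ s : ℝ, s < ‖x - a 0‖ / c → Hν s = 0) ∧
  (∀ t : ℝ, 0 ≤ t →
    Hν (t + ‖x - a t‖ / c) =
      (c / (4 * Real.pi * ‖x - a t‖ * (c + deriv (fun r : ℝ => ‖x - a r‖) t))) •
        cross3 (f t) ν)

lemma ninf_eq (y : E3) : ninf y = |y 0| ⊔ (|y 1| ⊔ |y 2|) := by
  refine le_antisymm (ciSup_le fun i => ?_) ?_
  · fin_cases i <;> simp [le_sup_left, le_sup_right, le_sup_iff, le_refl]
  · unfold ninf
    refine sup_le ?_ (sup_le ?_ ?_) <;>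
      exact le_ciSup (f := fun i : Fin 3 => |y i|) (Set.Finite.bddAbove (Set.finite_range _)) _

lemma coord_le_ninf (y : E3) (i : Fin 3) : |y i| ≤ ninf y := by
  rw [ninf_eq]; fin_cases i <;> simp [le_sup_iff, le_refl]

lemma ninf_nonneg (y : E3) : 0 ≤ ninf y := (abs_nonneg _).trans (coord_le_ninf y 0)

lemma ninf_zero : ninf (0 : E3) = 0 := by simp [ninf_eq]

lemma ninf_neg (y : E3) : ninf (-y) = ninf y := by simp [ninf_eq]

lemma ninf_smul (r : ℝ) (hr : 0 ≤ r) (y : E3) : ninf (r • y) = r * ninf y := by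
  simp only [ninf_eq, PiLp.smul_apply, smul_eq_mul, abs_mul, abs_of_nonneg hr]
  rw [mul_max_of_nonneg _ _ hr, mul_max_of_nonneg _ _ hr]

lemma ninf_sub_le (u w : E3) : ninf (u - w) ≤ ninf u + ninf w := by
  rw [ninf_eq]
  refine sup_le ?_ (sup_le ?_ ?_) <;>
    · rw [show ∀ i, (u - w) i = u i - w i from fun i => rfl]
      exact (abs_sub _ _).trans (add_le_add (coord_le_ninf _ _) (coord_le_ninf _ _))

lemma v_deriv (x : E3) (a : ℝ → E3) (ha : Differentiable ℝ a) (t : ℝ)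
    (hne : (0:ℝ) < ‖x - a t‖) :
    HasDerivAt (fun r => ‖x - a r‖) (deriv (fun r => ‖x - a r‖) t) t ∧
      |deriv (fun r => ‖x - a r‖) t| ≤ ‖deriv a t‖ := by
  have hu : HasDerivAt (fun r => x - a r) (-deriv a t) t :=
    ((ha t).hasDerivAt).const_sub x
  have hq : HasDerivAt (fun r => (inner ℝ (x - a r) (x - a r) : ℝ))
      (inner ℝ (x - a t) (-deriv a t) + inner ℝ (-deriv a t) (x - a t)) t := hu.inner ℝ hu
  have hq0 : (inner ℝ (x - a t) (x - a t) : ℝ) ≠ 0 := by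
    rw [real_inner_self_eq_norm_sq]; positivity
  have hs : HasDerivAt (fun r => Real.sqrt (inner ℝ (x - a r) (x - a r) : ℝ))
      ((1 / (2 * Real.sqrt (inner ℝ (x - a t) (x - a t) : ℝ))) *
        (inner ℝ (x - a t) (-deriv a t) + inner ℝ (-deriv a t) (x - a t))) t :=
    (Real.hasDerivAt_sqrt hq0).comp t hq
  have heq : (fun r => Real.sqrt (inner ℝ (x - a r) (x - a r) : ℝ)) = fun r => ‖x - a r‖ := by
    funext r; rw [real_inner_self_eq_norm_sq, Real.sqrt_sq (norm_nonneg _)]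
  rw [heq] at hs
  have hD := hs.deriv
  refine ⟨hD ▸ hs, ?_⟩
  rw [hD]
  rw [real_inner_self_eq_norm_sq, Real.sqrt_sq (norm_nonneg _)]
  have h1 : |(inner ℝ (x - a t) (-deriv a t) : ℝ) + inner ℝ (-deriv a t) (x - a t)|
      ≤ 2 * (‖x - a t‖ * ‖deriv a t‖) := by
    have c1 := abs_real_inner_le_norm (x - a t) (-deriv a t)
    have c2 := abs_real_inner_le_norm (-deriv a t) (x - a t)
    rw [norm_neg] at c1 c2
    calc _ ≤ _ := abs_add_le _ _
    _ ≤ ‖x - a t‖ * ‖deriv a t‖ + ‖deriv a t‖ * ‖x - a t‖ := add_le_add c1 c2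
    _ = 2 * (‖x - a t‖ * ‖deriv a t‖) := by ring
  rw [abs_mul]
  have h2 : |1 / (2 * ‖x - a t‖)| = 1 / (2 * ‖x - a t‖) := abs_of_pos (by positivity)
  rw [h2]
  calc 1 / (2 * ‖x - a t‖) * |(inner ℝ (x - a t) (-deriv a t) : ℝ) + inner ℝ (-deriv a t) (x - a t)|
      ≤ 1 / (2 * ‖x - a t‖) * (2 * (‖x - a t‖ * ‖deriv a t‖)) :=
        mul_le_mul_of_nonneg_left h1 (by positivity)
    _ = ‖deriv a t‖ := by field_simp

/-- Boundedness of the tangential field on `[0, T]`. -/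
lemma field_bdd (c c₀ d₁ d₀ T : ℝ)
    (hc₀ : 0 < c₀) (hc₀c : c₀ < c) (hd₁ : 0 < d₁)
    (x ν : E3) (f : ℝ → E3) (hf : Continuous f)
    (a : ℝ → E3) (ha : Differentiable ℝ a)
    (hspeed : ∀ t : ℝ, ‖deriv a t‖ ≤ c₀)
    (hdist : ∀ t : ℝ, d₁ ≤ ‖x - a t‖ ∧ ‖x - a t‖ ≤ d₀)
    (Hν : ℝ → E3) (hH : tangentialField c x a f ν Hν) :
    ∃ M : ℝ, ∀ s ∈ Set.Icc (0:ℝ) T, ninf (Hν s) ≤ M := by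
  have hc : (0:ℝ) < c := hc₀.trans hc₀c
  -- continuity of coordinates of f
  have hcoord : ∀ j : Fin 3, Continuous fun t => f t j := fun j =>
    (EuclideanSpace.proj (𝕜 := ℝ) j).continuous.comp hf
  -- bound on ninf (cross3 (f t) ν) over [0, T]
  have hGcont : Continuous fun t => ninf (cross3 (f t) ν) := by
    have : (fun t => ninf (cross3 (f t) ν)) = fun t =>
        |f t 1 * ν 2 - f t 2 * ν 1| ⊔ (|f t 2 * ν 0 - f t 0 * ν 2| ⊔ |f t 0 * ν 1 - f t 1 * ν 0|) := by
      funext t; rw [ninf_eq]; rfl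
    rw [this]
    exact ((((hcoord 1).mul continuous_const).sub ((hcoord 2).mul continuous_const)).abs).max
      (((((hcoord 2).mul continuous_const).sub ((hcoord 0).mul continuous_const)).abs).max
        ((((hcoord 0).mul continuous_const).sub ((hcoord 1).mul continuous_const)).abs))
  obtain ⟨B, hB⟩ := (isCompact_Icc (a := (0:ℝ)) (b := T)).exists_bound_of_continuousOn
    hGcont.continuousOn
  set Λ : ℝ := c / (4 * Real.pi * d₁ * (c - c₀)) with hΛ
  refine ⟨max (Λ * B) 0, fun s hs => ?_⟩
  by_cases hsx : s < ‖x - a 0‖ / c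
  · rw [hH.1 s hsx, ninf_zero]; exact le_max_right _ _
  push_neg at hsx
  -- find t with g t = s
  set v : ℝ → ℝ := fun r => ‖x - a r‖ with hv
  have hvpos : ∀ r, (0:ℝ) < v r := fun r => hd₁.trans_le (hdist r).1
  have hgc : ContinuousOn (fun r => r + v r / c) (Set.Icc 0 s) :=
    (continuous_id.add (((continuous_const.sub ha.continuous).norm).div_const c)).continuousOn
  have hmem : s ∈ Set.Icc ((fun r => r + v r / c) 0) ((fun r => r + v r / c) s) := by
    constructor
    · simpa using hsx
    · simp only
      nlinarith [hvpos s, div_pos (hvpos s) hc]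
  obtain ⟨t, ht, hgt⟩ := intermediate_value_Icc hs.1 hgc hmem
  have ht0 : 0 ≤ t := ht.1
  have htT : t ∈ Set.Icc (0:ℝ) T := ⟨ht0, ht.2.trans hs.2⟩
  have hdv := v_deriv x a ha t (hvpos t)
  have hdvb : |deriv (fun r => ‖x - a r‖) t| ≤ c₀ := hdv.2.trans (hspeed t)
  have hden : 4 * Real.pi * d₁ * (c - c₀) ≤
      4 * Real.pi * ‖x - a t‖ * (c + deriv (fun r => ‖x - a r‖) t) := by
    have hπ := Real.pi_pos
    have h1 : c - c₀ ≤ c + deriv (fun r => ‖x - a r‖) t := by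
      have := abs_le.1 hdvb; linarith [this.1]
    have h2 : d₁ ≤ ‖x - a t‖ := (hdist t).1
    have h4π : (0:ℝ) ≤ 4 * Real.pi := by positivity
    calc 4 * Real.pi * d₁ * (c - c₀) ≤ 4 * Real.pi * ‖x - a t‖ * (c - c₀) := by
          exact mul_le_mul_of_nonneg_right (mul_le_mul_of_nonneg_left h2 h4π) (by linarith)
      _ ≤ 4 * Real.pi * ‖x - a t‖ * (c + deriv (fun r => ‖x - a r‖) t) := by
          exact mul_le_mul_of_nonneg_left h1 (by positivity)
  have hdenpos : 0 < 4 * Real.pi * d₁ * (c - c₀) := by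
    have hπ := Real.pi_pos
    have hcc : 0 < c - c₀ := by linarith
    positivity
  have hlamL : c / (4 * Real.pi * ‖x - a t‖ * (c + deriv (fun r => ‖x - a r‖) t)) ≤ Λ := by
    rw [hΛ]
    exact div_le_div_of_nonneg_left hc.le hdenpos hden
  have hlam0 : 0 ≤ c / (4 * Real.pi * ‖x - a t‖ * (c + deriv (fun r => ‖x - a r‖) t)) :=
    div_nonneg hc.le (hdenpos.le.trans hden)
  have hHs : Hν s = (c / (4 * Real.pi * ‖x - a t‖ * (c + deriv (fun r => ‖x - a r‖) t))) •
      cross3 (f t) ν := by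
    rw [← hgt]; exact hH.2 t ht0
  rw [hHs, ninf_smul _ hlam0]
  have hBt : ninf (cross3 (f t) ν) ≤ B := (le_abs_self _).trans (hB t htT)
  refine le_max_of_le_left ?_
  exact mul_le_mul hlamL hBt (ninf_nonneg _) (div_nonneg hc.le hdenpos.le)
lemma key_stmt (c c₀ d₁ d₀ T : ℝ)
    (hc₀ : 0 < c₀) (hc₀c : c₀ < c)
    (hd₁ : 0 < d₁) (hd₁d₀ : d₁ ≤ d₀) (hT : d₀ / c ≤ T)
    (x ν : E3) (f : ℝ → E3) (hf : Continuous f)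
    (η : ℝ) (hηdef : η = sInf ((fun t : ℝ => ninf (cross3 (f t) ν)) '' Set.Icc 0 T))
    (hη : 0 < η)
    (a a' : ℝ → E3)
    (ha : Differentiable ℝ a) (ha' : Differentiable ℝ a')
    (hspeed : ∀ t : ℝ, ‖deriv a t‖ ≤ c₀) (hspeed' : ∀ t : ℝ, ‖deriv a' t‖ ≤ c₀)
    (hdist : ∀ t : ℝ, d₁ ≤ ‖x - a t‖ ∧ ‖x - a t‖ ≤ d₀)
    (hdist' : ∀ t : ℝ, d₁ ≤ ‖x - a' t‖ ∧ ‖x - a' t‖ ≤ d₀)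
    (Hν Hν' : ℝ → E3)
    (hH : tangentialField c x a f ν Hν) (hH' : tangentialField c x a' f ν Hν')
    (hle : ‖x - a 0‖ ≤ ‖x - a' 0‖) :
    |‖x - a 0‖ / c - ‖x - a' 0‖ / c| ≤
      12 * Real.pi * d₀ * (c + c₀) * T / (c * η) *
        sSup ((fun s : ℝ => ninf (Hν s - Hν' s)) '' Set.Icc 0 T) := by
  have hc : (0:ℝ) < c := hc₀.trans hc₀c
  have hπ := Real.pi_pos
  have hd₀ : (0:ℝ) < d₀ := hd₁.trans_le hd₁d₀
  have hT0 : (0:ℝ) < T := lt_of_lt_of_le (div_pos hd₀ hc) hT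
  set S := sSup ((fun s : ℝ => ninf (Hν s - Hν' s)) '' Set.Icc 0 T) with hSdef
  have hSnn : 0 ≤ S := Real.sSup_nonneg (by rintro z ⟨s, -, rfl⟩; exact ninf_nonneg _)
  have hC₀ : 0 ≤ 12 * Real.pi * d₀ * (c + c₀) * T / (c * η) := by positivity
  rcases eq_or_lt_of_le hle with heq | hlt
  · rw [heq, sub_self, abs_zero]; exact mul_nonneg hC₀ hSnn
  have hTx' : ‖x - a 0‖ / c < ‖x - a' 0‖ / c := by gcongr
  have hzero : Hν' (‖x - a 0‖ / c) = 0 := hH'.1 _ hTx'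
  have h0 := hH.2 0 le_rfl
  rw [zero_add] at h0
  set dv := deriv (fun r : ℝ => ‖x - a r‖) 0 with hdvdef
  have hdvb : |dv| ≤ c₀ :=
    (v_deriv x a ha 0 (hd₁.trans_le (hdist 0).1)).2.trans (hspeed 0)
  have hcc : (0:ℝ) < c - c₀ := by linarith
  have hcdv : c - c₀ ≤ c + dv := by have := (abs_le.1 hdvb).1; linarith
  have hden1 : 0 < 4 * Real.pi * ‖x - a 0‖ * (c + dv) := by
    have h1 : (0:ℝ) < ‖x - a 0‖ := hd₁.trans_le (hdist 0).1
    have h2 : (0:ℝ) < c + dv := hcc.trans_le hcdv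
    positivity
  have hdenle : 4 * Real.pi * ‖x - a 0‖ * (c + dv) ≤ 4 * Real.pi * d₀ * (c + c₀) := by
    have h1 : c + dv ≤ c + c₀ := by have := (abs_le.1 hdvb).2; linarith
    have h2 : 4 * Real.pi * ‖x - a 0‖ ≤ 4 * Real.pi * d₀ :=
      mul_le_mul_of_nonneg_left (hdist 0).2 (by positivity)
    have h3 : (0:ℝ) < c + dv := hcc.trans_le hcdv
    exact mul_le_mul h2 h1 h3.le (by positivity)
  have hlam : c / (4 * Real.pi * d₀ * (c + c₀)) ≤ c / (4 * Real.pi * ‖x - a 0‖ * (c + dv)) :=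
    div_le_div_of_nonneg_left hc.le hden1 hdenle
  have hηle : η ≤ ninf (cross3 (f 0) ν) := by
    rw [hηdef]
    exact csInf_le ⟨0, by rintro z ⟨u, -, rfl⟩; exact ninf_nonneg _⟩
      ⟨0, ⟨le_rfl, hT0.le⟩, rfl⟩
  have hmemTx : ‖x - a 0‖ / c ∈ Set.Icc (0:ℝ) T := by
    refine ⟨by positivity, le_trans ?_ hT⟩
    gcongr
    exact (hdist 0).2
  obtain ⟨M1, hM1⟩ := field_bdd c c₀ d₁ d₀ T hc₀ hc₀c hd₁ x ν f hf a ha hspeed hdist Hν hH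
  obtain ⟨M2, hM2⟩ := field_bdd c c₀ d₁ d₀ T hc₀ hc₀c hd₁ x ν f hf a' ha' hspeed' hdist' Hν' hH'
  have hbdd : BddAbove ((fun s : ℝ => ninf (Hν s - Hν' s)) '' Set.Icc 0 T) := by
    refine ⟨M1 + M2, ?_⟩
    rintro z ⟨s, hs, rfl⟩
    exact (ninf_sub_le _ _).trans (add_le_add (hM1 s hs) (hM2 s hs))
  have hS : c / (4 * Real.pi * d₀ * (c + c₀)) * η ≤ S := by
    refine le_trans ?_ (le_csSup hbdd ⟨_, hmemTx, rfl⟩)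
    simp only [hzero, sub_zero, h0]
    rw [ninf_smul _ (div_nonneg hc.le hden1.le)]
    exact mul_le_mul hlam hηle hη.le (div_nonneg hc.le hden1.le)
  have hkey : 12 * Real.pi * d₀ * (c + c₀) * T / (c * η) *
      (c / (4 * Real.pi * d₀ * (c + c₀)) * η) = 3 * T := by
    have hπ0 : Real.pi ≠ 0 := Real.pi_ne_zero
    have h1 : d₀ ≠ 0 := hd₀.ne'
    have h2 : c + c₀ ≠ 0 := by positivity
    have h3 : c ≠ 0 := hc.ne'
    have h4 : η ≠ 0 := hη.ne'
    field_simp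
    ring
  have h2 : 3 * T ≤ 12 * Real.pi * d₀ * (c + c₀) * T / (c * η) * S := by
    rw [← hkey]; exact mul_le_mul_of_nonneg_left hS hC₀
  have h3 : ‖x - a' 0‖ / c ≤ T := by
    refine le_trans ?_ hT
    gcongr
    exact (hdist' 0).2
  have h4 : (0:ℝ) ≤ ‖x - a 0‖ / c := by positivity
  rw [abs_of_nonpos (by linarith : ‖x - a 0‖ / c - ‖x - a' 0‖ / c ≤ 0)]
  linarith

/-- **Stability of the signal arrival time.** With arrival times
`T(x) = ‖x - a 0‖/c` and `T̃(x) = ‖x - a' 0‖/c`, one has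
`|T(x) − T̃(x)| ≤ C₀ · sup_{s∈[0,T]} ‖Hν s − Hν' s‖_∞` where
`C₀ = 12π d₀ (c + c₀) T / (c η)` and `η = inf_{t∈[0,T]} ‖f t ×₃ ν‖_∞ > 0`. -/
theorem stmt_9 (c c₀ d₁ d₀ T : ℝ)
    (hc₀ : 0 < c₀) (hc₀c : c₀ < c)
    (hd₁ : 0 < d₁) (hd₁d₀ : d₁ ≤ d₀) (hT : d₀ / c ≤ T)
    (x ν : E3) (f : ℝ → E3) (hf : Continuous f)
    (η : ℝ) (hηdef : η = sInf ((fun t : ℝ => ninf (cross3 (f t) ν)) '' Set.Icc 0 T))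
    (hη : 0 < η)
    (a a' : ℝ → E3)
    (ha : Differentiable ℝ a) (ha' : Differentiable ℝ a')
    (hspeed : ∀ t : ℝ, ‖deriv a t‖ ≤ c₀) (hspeed' : ∀ t : ℝ, ‖deriv a' t‖ ≤ c₀)
    (hdist : ∀ t : ℝ, d₁ ≤ ‖x - a t‖ ∧ ‖x - a t‖ ≤ d₀)
    (hdist' : ∀ t : ℝ, d₁ ≤ ‖x - a' t‖ ∧ ‖x - a' t‖ ≤ d₀)
    (Hν Hν' : ℝ → E3)
    (hH : tangentialField c x a f ν Hν) (hH' : tangentialField c x a' f ν Hν') :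
    |‖x - a 0‖ / c - ‖x - a' 0‖ / c| ≤
      12 * Real.pi * d₀ * (c + c₀) * T / (c * η) *
        sSup ((fun s : ℝ => ninf (Hν s - Hν' s)) '' Set.Icc 0 T) := by
  rcases le_total (‖x - a 0‖) (‖x - a' 0‖) with h | h
  · exact key_stmt c c₀ d₁ d₀ T hc₀ hc₀c hd₁ hd₁d₀ hT x ν f hf η hηdef hη a a' ha ha'
      hspeed hspeed' hdist hdist' Hν Hν' hH hH' h
  · have hfun : (fun s : ℝ => ninf (Hν' s - Hν s)) = fun s : ℝ => ninf (Hν s - Hν' s) := by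
      funext s; rw [← ninf_neg, neg_sub]
    have := key_stmt c c₀ d₁ d₀ T hc₀ hc₀c hd₁ hd₁d₀ hT x ν f hf η hηdef hη a' a ha' ha
      hspeed' hspeed hdist' hdist Hν' Hν hH' hH h
    rw [abs_sub_comm, hfun] at this
    exact this
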